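/- Let I be a path instance of length ℓ over a set A, let U be the variable set of the instance I_λ, and for each v ∈ U let D_v ⊆ B_v be the set of all values s(v) where s ranges over solutions of (I_λ)_{[1,v]} (the restriction of I_λ to its variables that are at most v). Then D_v = C_v for all v ∈ U. In particular, I_λ is satisfiable if and only if I is satisfiable. -/

import Mathlib

namespace CSPPaper

/-- A relational structure on `A`: a family of finitary relations (the basic
relations), a relation of arity `n` being a set of `n`-tuples `Fin n → A`. -/
structure RelStruct (A : Type) where
  basic : Set (Σ n : ℕ, Set (Fin n → A))

/-- A CSP instance with variables `V` over domain `A`: a set of constraints,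
each consisting of a scope (a tuple of variables) and a constraint relation. -/
structure Instance (A : Type) (V : Type) where
  constraints : Set (Σ n : ℕ, (Fin n → V) × Set (Fin n → A))

/-- `f : V → A` is a solution of the instance `I`. -/
def Instance.Sol {A V : Type} (I : Instance A V) (f : V → A) : Prop :=
  ∀ c ∈ I.constraints, (fun i => f (c.2.1 i)) ∈ c.2.2

def Instance.Satisfiable {A V : Type} (I : Instance A V) : Prop :=
  ∃ f, I.Sol f

/-- `I` is an instance of `CSP(𝔸)`: all its constraint relations are basic
relations of `𝔸`. -/
def IsCSPInstance {A V : Type} (𝔸 : RelStruct A) (I : Instance A V) : Prop :=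
  ∀ c ∈ I.constraints, (⟨c.1, c.2.2⟩ : Σ n : ℕ, Set (Fin n → A)) ∈ 𝔸.basic

/-- An atom of a Datalog rule over the variable set `Fin r`: a predicate
(a relation on `A`) applied to a tuple of variables. -/
structure Atom (A : Type) (r : ℕ) where
  arity : ℕ
  scope : Fin arity → Fin r
  rel : Set (Fin arity → A)

def Atom.holds {A : Type} {r : ℕ} (a : Atom A r) (f : Fin r → A) : Prop :=
  (fun i => f (a.scope i)) ∈ a.rel

/-- A rule of the `r`-ary maximal symmetric Datalog program `𝒫_𝔸^r` consistent
with `𝔸`: a linear Datalog rule on at most `r` variables, whose head is an IDB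
(an arbitrary relation on `A` of arity at most `r`), whose body contains at most
one IDB atom (`idb`) and otherwise non-IDB atoms for basic relations of `𝔸`
of arity at most `r` (`edb`, without repetition), such that the rule is
consistent with `𝔸`, and, if the body contains an IDB atom, its mirror image is
also consistent with `𝔸`. -/
structure Rule (A : Type) (𝔸 : RelStruct A) (r : ℕ) where
  head : Atom A r
  idb : Option (Atom A r)
  edb : List (Atom A r)
  head_arity : head.arity ≤ r
  idb_arity : ∀ a ∈ idb, a.arity ≤ r
  edb_arity : ∀ a ∈ edb, a.arity ≤ r
  edb_basic : ∀ a ∈ edb, (⟨a.arity, a.rel⟩ : Σ n : ℕ, Set (Fin n → A)) ∈ 𝔸.basic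
  nodup : edb.Nodup
  consistent : ∀ f : Fin r → A,
    (∀ a ∈ idb, a.holds f) → (∀ a ∈ edb, a.holds f) → head.holds f
  mirror : ∀ a ∈ idb, ∀ f : Fin r → A,
    head.holds f → (∀ b ∈ edb, b.holds f) → a.holds f

/-- `Derives 𝔸 r I ρ R`: the `r`-ary maximal symmetric Datalog program
`𝒫_𝔸^r` consistent with `𝔸`, run on the instance `I`, derives `R(ρ)`.
This holds if `(ρ, R)` is a constraint of `I`, or if some rule of `𝒫_𝔸^r`
with head `R(τ)` admits an evaluation `ω` of its variables into `V` with
`ω ∘ τ = ρ`, whose (at most one) IDB body atom is derived and whose non-IDB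
body atoms are constraints of `I` under `ω`. -/
inductive Derives {A V : Type} (𝔸 : RelStruct A) (r : ℕ) (I : Instance A V) :
    ∀ {n : ℕ}, (Fin n → V) → Set (Fin n → A) → Prop
  | base {n : ℕ} (ρ : Fin n → V) (R : Set (Fin n → A)) :
      (⟨n, ρ, R⟩ : Σ n : ℕ, (Fin n → V) × Set (Fin n → A)) ∈ I.constraints →
      Derives 𝔸 r I ρ R
  | step (rule : Rule A 𝔸 r) (ω : Fin r → V) :
      (∀ a ∈ rule.idb, Derives 𝔸 r I (fun i => ω (a.scope i)) a.rel) →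
      (∀ a ∈ rule.edb,
        (⟨a.arity, fun i => ω (a.scope i), a.rel⟩ :
          Σ n : ℕ, (Fin n → V) × Set (Fin n → A)) ∈ I.constraints) →
      Derives 𝔸 r I (fun i => ω (rule.head.scope i)) rule.head.rel

/-- `𝒫_𝔸^r(I) ⊢ G`: the program derives a goal predicate, i.e. an empty
relation of arity at most `r`. -/
def DerivesGoal {A V : Type} (𝔸 : RelStruct A) (r : ℕ) (I : Instance A V) : Prop :=
  ∃ (n : ℕ) (ρ : Fin n → V), n ≤ r ∧ Derives 𝔸 r I ρ (∅ : Set (Fin n → A))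

/-- `𝒫_𝔸^r(I) ⊢ J`: the program run on `I` derives every constraint of `J`. -/
def DerivesInstance {A V : Type} (𝔸 : RelStruct A) (r : ℕ) (I J : Instance A V) : Prop :=
  ∀ c ∈ J.constraints, Derives 𝔸 r I c.2.1 c.2.2

/-- An `m`-ary operation `t` preserves the `n`-ary relation `R`. -/
def PreservesRel {A : Type} {m n : ℕ} (t : (Fin m → A) → A) (R : Set (Fin n → A)) : Prop :=
  ∀ rows : Fin m → Fin n → A, (∀ j, rows j ∈ R) → (fun i => t (fun j => rows j i)) ∈ R

/-- A polymorphism of `𝔸`: an operation preserving all basic relations. -/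
def IsPolymorphism {A : Type} {m : ℕ} (𝔸 : RelStruct A) (t : (Fin m → A) → A) : Prop :=
  ∀ R ∈ 𝔸.basic, PreservesRel t R.2

def ternaryOp {A : Type} (p : A → A → A → A) : (Fin 3 → A) → A :=
  fun v => p (v 0) (v 1) (v 2)

/-- A chain of `n` Hagemann–Mitschke terms: idempotent ternary operations
`p 0, …, p n` with `p 0 x y z = x`, `p k x x y = p (k+1) x y y`, `p n x y z = z`. -/
def IsHMChain {A : Type} (n : ℕ) (p : ℕ → A → A → A → A) : Prop :=
  (∀ k ≤ n, ∀ x : A, p k x x x = x) ∧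
  (∀ x y z : A, p 0 x y z = x) ∧
  (∀ x y z : A, p n x y z = z) ∧
  (∀ k < n, ∀ x y : A, p k x x y = p (k + 1) x y y)

def Pres3Set {A : Type} (p : A → A → A → A) (S : Set A) : Prop :=
  ∀ x y z, x ∈ S → y ∈ S → z ∈ S → p x y z ∈ S

def Pres3Rel {A : Type} (p : A → A → A → A) (E : Set (A × A)) : Prop :=
  ∀ u v w, u ∈ E → v ∈ E → w ∈ E → (p u.1 v.1 w.1, p u.2 v.2 w.2) ∈ E

def PresOpSet {A : Type} {m : ℕ} (t : (Fin m → A) → A) (S : Set A) : Prop :=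
  ∀ x : Fin m → A, (∀ j, x j ∈ S) → t x ∈ S

def PresOpRel {A : Type} {m : ℕ} (t : (Fin m → A) → A) (E : Set (A × A)) : Prop :=
  ∀ x y : Fin m → A, (∀ j, (x j, y j) ∈ E) → (t x, t y) ∈ E

/-- A path instance of length `len`: variables `1, …, len`, one unary
constraint `B i` on each variable `i ∈ [1, len]`, and one binary constraint
`E i` with scope `(i, i+1)` for each `i ∈ [1, len-1]`. -/
structure PathInstance (A : Type) where
  len : ℕ
  B : ℕ → Set A
  E : ℕ → Set (A × A)

/-- A solution of the subinstance of the path instance `I` induced by `[a, b]`. -/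
def IsSolutionOn {A : Type} (I : PathInstance A) (a b : ℕ) (s : ℕ → A) : Prop :=
  (∀ i, a ≤ i → i ≤ b → s i ∈ I.B i) ∧
  (∀ i, a ≤ i → i + 1 ≤ b → (s i, s (i + 1)) ∈ I.E i)

def IsSolution {A : Type} (I : PathInstance A) (s : ℕ → A) : Prop :=
  IsSolutionOn I 1 I.len s

def unaryRel {A : Type} (S : Set A) : Set (Fin 1 → A) := {f | f 0 ∈ S}

def pairRel {A : Type} (E : Set (A × A)) : Set (Fin 2 → A) := {f | (f 0, f 1) ∈ E}

/-- The path instance `I`, presented as a CSP instance on the variable set `ℕ`. -/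
def PathInstance.toInstance {A : Type} (I : PathInstance A) : Instance A ℕ where
  constraints :=
    {c | (∃ i, 1 ≤ i ∧ i ≤ I.len ∧
            c = ⟨1, fun _ => i, unaryRel (I.B i)⟩) ∨
         (∃ i, 1 ≤ i ∧ i + 1 ≤ I.len ∧
            c = ⟨2, ![i, i + 1], pairRel (I.E i)⟩)}

/-- An `n`-braid in the path instance `I`: solutions `s 0, …, s n` and indices
`1 ≤ idx 1 < … < idx n ≤ I.len` with `s k (idx k) = s (k+1) (idx k)` and
`s (k-1) (idx (k+1)) = s k (idx (k+1))` for `k = 1, …, n-1`. -/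
def IsBraid {A : Type} (I : PathInstance A) (n : ℕ) (s : ℕ → ℕ → A) (idx : ℕ → ℕ) : Prop :=
  (∀ k ≤ n, IsSolution I (s k)) ∧
  1 ≤ idx 1 ∧ idx n ≤ I.len ∧
  (∀ k, 1 ≤ k → k < n → idx k < idx (k + 1)) ∧
  (∀ k, 1 ≤ k → k + 1 ≤ n →
    s k (idx k) = s (k + 1) (idx k) ∧ s (k - 1) (idx (k + 1)) = s k (idx (k + 1)))

/-- The binary constraint of `I` with scope `(i, i+1)` is subdirect. -/
def SubdirectAt {A : Type} (I : PathInstance A) (i : ℕ) : Prop :=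
  (I.B i).Nonempty ∧ (I.B (i + 1)).Nonempty ∧
  (∀ a ∈ I.B i, ∃ b ∈ I.B (i + 1), (a, b) ∈ I.E i) ∧
  (∀ b ∈ I.B (i + 1), ∃ a ∈ I.B i, (a, b) ∈ I.E i)

/-- The subinstance of `I` induced by `[a, b]` is subdirect. -/
def SubdirectOn {A : Type} (I : PathInstance A) (a b : ℕ) : Prop :=
  ∀ i, a ≤ i → i + 1 ≤ b → SubdirectAt I i

def Subdirect {A : Type} (I : PathInstance A) : Prop := SubdirectOn I 1 I.len

/-- The sets `C_i`: `C 1 = B 1` and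
`C (i+1) = {b ∈ B (i+1) | ∃ c ∈ C i, (c, b) ∈ E i}`. -/
def reachSet {A : Type} (I : PathInstance A) : ℕ → Set A
  | 0 => ∅
  | 1 => I.B 1
  | (i + 2) => {b ∈ I.B (i + 2) | ∃ c ∈ reachSet I (i + 1), (c, b) ∈ I.E (i + 1)}

/-- `B_{i,i+1}` contains a backward edge: an edge `(b, c) ∈ E i` with
`b ∈ B i \ C i` and `c ∈ C (i+1)`. -/
def BackwardAt {A : Type} (I : PathInstance A) (i : ℕ) : Prop :=
  1 ≤ i ∧ i + 1 ≤ I.len ∧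
  ∃ b c, (b, c) ∈ I.E i ∧ b ∈ I.B i ∧ b ∉ reachSet I i ∧ c ∈ reachSet I (i + 1)

/-- Adjacency in the graph `Conn(I_{[lo,hi]})`: its vertices are pairs `(i, a)`
with `a ∈ B i`, `lo ≤ i ≤ hi`, and `(i, a)` is adjacent to `(i+1, b)` whenever
`(a, b) ∈ E i`. -/
def connAdj {A : Type} (I : PathInstance A) (lo hi : ℕ) (p q : ℕ × A) : Prop :=
  lo ≤ p.1 ∧ p.1 + 1 ≤ hi ∧ q.1 = p.1 + 1 ∧
  p.2 ∈ I.B p.1 ∧ q.2 ∈ I.B q.1 ∧ (p.2, q.2) ∈ I.E p.1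

/-- `λ_{I,lo,hi}`: the pairs `(a, b) ∈ B lo × B hi` joined by an undirected path
in `Conn(I_{[lo,hi]})`. -/
def lamRel {A : Type} (I : PathInstance A) (lo hi : ℕ) : Set (A × A) :=
  {ab | ab.1 ∈ I.B lo ∧ ab.2 ∈ I.B hi ∧
    Relation.ReflTransGen (fun p q => connAdj I lo hi p q ∨ connAdj I lo hi q p)
      (lo, ab.1) (hi, ab.2)}

open Classical in
/-- The variable set `U` of the instance `I_λ`: the variables `1`, `len`, and
`i, i+1` for every index `i` such that `B_{i,i+1}` has a backward edge. -/
noncomputable def lamVars {A : Type} (I : PathInstance A) : Finset ℕ :=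
  (Finset.Icc 1 I.len).filter
    (fun v => v = 1 ∨ v = I.len ∨ BackwardAt I v ∨ (2 ≤ v ∧ BackwardAt I (v - 1)))

/-- The `t`-th smallest element of `U` (`1`-indexed). -/
noncomputable def lamEnum {A : Type} (I : PathInstance A) (t : ℕ) : ℕ :=
  ((lamVars I).sort (· ≤ ·)).getD (t - 1) 0

/-- The instance `I_λ`, presented as a path instance whose `t`-th variable is
the `t`-th smallest element of `U`: it consists of the subinstance of `I`
induced by `U`, where each gap between consecutive elements `u < w` of `U` with
`w > u + 1` is filled by the binary constraint `λ_{I,u,w}`. -/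
noncomputable def lamInst {A : Type} (I : PathInstance A) : PathInstance A where
  len := (lamVars I).card
  B := fun t => I.B (lamEnum I t)
  E := fun t =>
    if lamEnum I (t + 1) = lamEnum I t + 1 then I.E (lamEnum I t)
    else lamRel I (lamEnum I t) (lamEnum I (t + 1))

/-- Unpacking an `m`-tuple of elements of `V^k` into an `m*k`-tuple of
elements of `V`. -/
def unpackTuple {X : Type} {m k : ℕ} (σ : Fin m → Fin k → X) : Fin (m * k) → X :=
  fun t => σ t.divNat t.modNat

/-- Unpacking an `m`-ary relation on `A^k` into an `m*k`-ary relation on `A`. -/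
def unpackRel {A : Type} {m k : ℕ} (U : Set (Fin m → Fin k → A)) :
    Set (Fin (m * k) → A) :=
  {t | ∃ u ∈ U, ∀ i : Fin (m * k), t i = u i.divNat i.modNat}

/-- The instance `I` has pathwidth at most `p`. -/
def PathwidthLE {A V : Type} (I : Instance A V) (p : ℕ) : Prop :=
  ∃ (m : ℕ) (U : Fin m → Set V),
    (∀ v : V, ∃ i, v ∈ U i) ∧
    (∀ i, (U i).Finite ∧ (U i).ncard ≤ p + 1) ∧
    (∀ i j q : Fin m, i ≤ q → q ≤ j → ∀ v, v ∈ U i → v ∈ U j → v ∈ U q) ∧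
    (∀ c ∈ I.constraints, ∃ i, Set.range c.2.1 ⊆ U i)

/-- `𝔸` has pathwidth duality `p`: for every unsatisfiable instance `I` of
`CSP(𝔸)` there is an unsatisfiable instance `J` of `CSP(𝔸)` of pathwidth at
most `p` such that identifying some variables of `J` (along `h`) yields a
subinstance of `I`. -/
def HasPathwidthDuality {A : Type} (𝔸 : RelStruct A) (p : ℕ) : Prop :=
  ∀ (V : Type) (I : Instance A V), IsCSPInstance 𝔸 I → ¬I.Satisfiable →
    ∃ (W : Type) (J : Instance A W) (h : W → V),
      IsCSPInstance 𝔸 J ∧ ¬J.Satisfiable ∧ PathwidthLE J p ∧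
      ∀ c ∈ J.constraints,
        (⟨c.1, fun i => h (c.2.1 i), c.2.2⟩ :
          Σ n : ℕ, (Fin n → V) × Set (Fin n → A)) ∈ I.constraints

/-- The `k`-th bubble power `𝔸^(k)` of `𝔸`: the relational structure on `A^k`
whose basic relations are all unary relations definable as conjunctions of
basic relations of `𝔸` (with identification of variables and dummy variables,
but no existential quantification), and all binary relations
`E_ℐ = {(a, b) | ∀ (i,j) ∈ ℐ, a i = b j}` for `ℐ ⊆ [k]²`. -/
def bubblePower {A : Type} (𝔸 : RelStruct A) (k : ℕ) : RelStruct (Fin k → A) where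
  basic :=
    {r | (∃ L : Set (Σ n : ℕ, (Fin n → Fin k) × Set (Fin n → A)),
            (∀ c ∈ L, (⟨c.1, c.2.2⟩ : Σ n : ℕ, Set (Fin n → A)) ∈ 𝔸.basic) ∧
            r = ⟨1, {f : Fin 1 → (Fin k → A) |
                      ∀ c ∈ L, (fun i => f 0 (c.2.1 i)) ∈ c.2.2}⟩) ∨
         (∃ Idx : Set (Fin k × Fin k),
            r = ⟨2, {f : Fin 2 → (Fin k → A) | ∀ q ∈ Idx, f 0 q.1 = f 1 q.2}⟩)}


section Aux

variable {A : Type}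

lemma reachSet_subset_B (I : PathInstance A) {i : ℕ} (hi : 1 ≤ i) :
    reachSet I i ⊆ I.B i := by
  cases i with
  | zero => omega
  | succ j =>
    cases j with
    | zero => exact subset_rfl
    | succ k => exact fun b hb => hb.1

lemma reachSet_succ (I : PathInstance A) {i : ℕ} (hi : 1 ≤ i) :
    reachSet I (i + 1) = {b ∈ I.B (i + 1) | ∃ c ∈ reachSet I i, (c, b) ∈ I.E i} := by
  cases i with
  | zero => omega
  | succ j => rfl

lemma solSet_eq_reachSet (P : PathInstance A) :
    ∀ t, 1 ≤ t →
      {a | ∃ s : ℕ → A, IsSolutionOn P 1 t s ∧ s t = a} = reachSet P t := by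
  intro t ht
  induction t, ht using Nat.le_induction with
  | base =>
    ext a
    simp only [Set.mem_setOf_eq]
    constructor
    · rintro ⟨s, ⟨hB, _⟩, rfl⟩
      exact hB 1 le_rfl le_rfl
    · intro ha
      exact ⟨fun _ => a, ⟨fun i h1 h2 => by
        have : i = 1 := le_antisymm h2 h1
        subst this; exact ha, fun i h1 h2 => by omega⟩, rfl⟩
  | succ t ht ih =>
    ext b
    rw [reachSet_succ P ht]
    simp only [Set.mem_setOf_eq]
    constructor
    · rintro ⟨s, ⟨hB, hE⟩, rfl⟩
      refine ⟨hB (t + 1) (by omega) le_rfl, s t, ?_, hE t ht le_rfl⟩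
      rw [← ih]
      exact ⟨s, ⟨fun i h1 h2 => hB i h1 (by omega),
        fun i h1 h2 => hE i h1 (by omega)⟩, rfl⟩
    · rintro ⟨hbB, c, hc, hedge⟩
      rw [← ih] at hc
      obtain ⟨s, ⟨hB, hE⟩, hst⟩ := hc
      refine ⟨Function.update s (t + 1) b, ⟨?_, ?_⟩, ?_⟩
      · intro i h1 h2
        rcases eq_or_lt_of_le h2 with rfl | h
        · simpa using hbB
        · rw [Function.update_of_ne (by omega)]
          exact hB i h1 (by omega)
      · intro i h1 h2
        rcases eq_or_lt_of_le h2 with h' | h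
        · have : i = t := by omega
          subst this
          rw [Function.update_of_ne (by omega), Function.update_self, hst]
          exact hedge
        · rw [Function.update_of_ne (by omega), Function.update_of_ne (by omega)]
          exact hE i h1 (by omega)
      · exact Function.update_self _ _ _

lemma mem_lamVars_iff {I : PathInstance A} {v : ℕ} :
    v ∈ lamVars I ↔ (1 ≤ v ∧ v ≤ I.len) ∧
      (v = 1 ∨ v = I.len ∨ BackwardAt I v ∨ (2 ≤ v ∧ BackwardAt I (v - 1))) := by
  classical
  simp [lamVars, Finset.mem_filter, Finset.mem_Icc, and_assoc]

lemma one_mem_lamVars {I : PathInstance A} (hlen : 1 ≤ I.len) : 1 ∈ lamVars I :=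
  mem_lamVars_iff.mpr ⟨⟨le_rfl, hlen⟩, Or.inl rfl⟩

lemma len_mem_lamVars {I : PathInstance A} (hlen : 1 ≤ I.len) : I.len ∈ lamVars I :=
  mem_lamVars_iff.mpr ⟨⟨hlen, le_rfl⟩, Or.inr (Or.inl rfl)⟩

lemma backward_mem_lamVars {I : PathInstance A} {i : ℕ} (h : BackwardAt I i) :
    i ∈ lamVars I ∧ (i + 1) ∈ lamVars I := by
  obtain ⟨h1, h2, -⟩ := id h
  constructor
  · exact mem_lamVars_iff.mpr ⟨⟨h1, by omega⟩, Or.inr (Or.inr (Or.inl h))⟩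
  · refine mem_lamVars_iff.mpr ⟨⟨by omega, h2⟩, Or.inr (Or.inr (Or.inr ⟨by omega, ?_⟩))⟩
    simpa using h

lemma lamEnum_eq_get (I : PathInstance A) {t : ℕ} (h1 : 1 ≤ t) (h2 : t ≤ (lamVars I).card) :
    lamEnum I t = ((lamVars I).sort (· ≤ ·)).get
      ⟨t - 1, by rw [Finset.length_sort]; omega⟩ := by
  rw [lamEnum]
  exact List.getD_eq_get _ _ ⟨t - 1, by rw [Finset.length_sort]; omega⟩

lemma lamEnum_mem (I : PathInstance A) {t : ℕ} (h1 : 1 ≤ t) (h2 : t ≤ (lamVars I).card) :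
    lamEnum I t ∈ lamVars I := by
  rw [lamEnum_eq_get I h1 h2]
  exact (Finset.mem_sort (α := ℕ) (· ≤ ·)).mp (List.get_mem _ _)

lemma lamEnum_lt (I : PathInstance A) {t t' : ℕ} (h1 : 1 ≤ t) (h : t < t')
    (h2 : t' ≤ (lamVars I).card) : lamEnum I t < lamEnum I t' := by
  rw [lamEnum_eq_get I h1 (by omega), lamEnum_eq_get I (by omega) h2]
  exact (Finset.sortedLT_sort _).pairwise.rel_get_of_lt (by simp [Fin.lt_def]; omega)

lemma lamEnum_between (I : PathInstance A) {t x : ℕ} (h1 : 1 ≤ t)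
    (h2 : t + 1 ≤ (lamVars I).card) (hx : x ∈ lamVars I)
    (hlt : lamEnum I t < x) (hlt' : x < lamEnum I (t + 1)) : False := by
  obtain ⟨k, hk⟩ := List.get_of_mem ((Finset.mem_sort (α := ℕ) (· ≤ ·)).mpr hx)
  have sorted := (Finset.sortedLT_sort (lamVars I)).pairwise
  have mono : ∀ i j : Fin ((lamVars I).sort (· ≤ ·)).length,
      ((lamVars I).sort (· ≤ ·)).get i < ((lamVars I).sort (· ≤ ·)).get j → i < j := by
    intro i j hij
    by_contra hcon
    push_neg at hcon
    rcases eq_or_lt_of_le hcon with h' | h'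
    · rw [h'] at hij; exact lt_irrefl _ hij
    · exact lt_asymm hij (sorted.rel_get_of_lt h')
  rw [lamEnum_eq_get I h1 (by omega)] at hlt
  rw [lamEnum_eq_get I (by omega) h2] at hlt'
  rw [← hk] at hlt hlt'
  have H1 := mono _ _ hlt
  have H2 := mono _ _ hlt'
  simp only [Fin.lt_def] at H1 H2
  omega

lemma lamEnum_one (I : PathInstance A) (hlen : 1 ≤ I.len) : lamEnum I 1 = 1 := by
  have hcard : 1 ≤ (lamVars I).card := Finset.card_pos.mpr ⟨1, one_mem_lamVars hlen⟩
  have h1 : (1 : ℕ) ≤ lamEnum I 1 := (mem_lamVars_iff.mp (lamEnum_mem I le_rfl hcard)).1.1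
  obtain ⟨k, hk⟩ := List.get_of_mem ((Finset.mem_sort (α := ℕ) (· ≤ ·)).mpr (one_mem_lamVars hlen))
  have h2 : lamEnum I 1 ≤ 1 := by
    have hle := (Finset.pairwise_sort (lamVars I) (· ≤ ·)).rel_get_of_le
      (show (⟨1 - 1, by rw [Finset.length_sort]; omega⟩ :
        Fin ((lamVars I).sort (· ≤ ·)).length) ≤ k by simp [Fin.le_def])
    rw [hk] at hle
    rw [lamEnum_eq_get I le_rfl hcard]
    exact hle
  omega

lemma lamEnum_card (I : PathInstance A) (hlen : 1 ≤ I.len) :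
    lamEnum I (lamVars I).card = I.len := by
  have hcard : 1 ≤ (lamVars I).card := Finset.card_pos.mpr ⟨1, one_mem_lamVars hlen⟩
  have h1 : lamEnum I (lamVars I).card ≤ I.len :=
    (mem_lamVars_iff.mp (lamEnum_mem I hcard le_rfl)).1.2
  obtain ⟨k, hk⟩ := List.get_of_mem ((Finset.mem_sort (α := ℕ) (· ≤ ·)).mpr (len_mem_lamVars hlen))
  have h2 : I.len ≤ lamEnum I (lamVars I).card := by
    have hkl : (k : ℕ) < (lamVars I).card := by simpa using k.isLt
    have hle := (Finset.pairwise_sort (lamVars I) (· ≤ ·)).rel_get_of_le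
      (show k ≤ (⟨(lamVars I).card - 1, by rw [Finset.length_sort]; omega⟩ :
        Fin ((lamVars I).sort (· ≤ ·)).length) by simp [Fin.le_def]; omega)
    rw [hk] at hle
    rw [lamEnum_eq_get I hcard le_rfl]
    exact hle
  omega

lemma noBackward_forward (I : PathInstance A) {u w : ℕ} (hu : 1 ≤ u) (hwl : w ≤ I.len)
    (hnb : ∀ i, u ≤ i → i + 1 ≤ w → ¬ BackwardAt I i)
    {a : A} (ha : a ∈ reachSet I u) {p : ℕ × A}
    (hpath : Relation.ReflTransGen
      (fun p q => connAdj I u w p q ∨ connAdj I u w q p) (u, a) p) :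
    p.2 ∈ reachSet I p.1 := by
  induction hpath with
  | refl => exact ha
  | tail hab hbc ih =>
    rename_i q r
    rcases hbc with hc | hc
    · obtain ⟨h1, h2, h3, h4, h5, h6⟩ := hc
      rw [h3, reachSet_succ I (hu.trans h1)]
      refine ⟨by rw [← h3]; exact h5, q.2, ih, h6⟩
    · obtain ⟨h1, h2, h3, h4, h5, h6⟩ := hc
      by_contra hno
      exact hnb r.1 h1 h2 ⟨hu.trans h1, h2.trans hwl, r.2, q.2, h6, h4, hno,
        by rw [← h3]; exact ih⟩

lemma reach_path (I : PathInstance A) {u w : ℕ} (hu : 1 ≤ u) :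
    ∀ j, u ≤ j → j ≤ w → ∀ b ∈ reachSet I j,
      ∃ a ∈ reachSet I u, Relation.ReflTransGen
        (fun p q => connAdj I u w p q ∨ connAdj I u w q p) (u, a) (j, b) := by
  intro j hj
  induction j, hj using Nat.le_induction with
  | base => exact fun _ b hb => ⟨b, hb, Relation.ReflTransGen.refl⟩
  | succ j hj ih =>
    intro hjw b hb
    rw [reachSet_succ I (hu.trans hj)] at hb
    obtain ⟨hbB, c, hc, hE⟩ := hb
    obtain ⟨a, ha, hpath⟩ := ih (by omega) c hc
    exact ⟨a, ha, hpath.tail (Or.inl ⟨hj, by omega, rfl,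
      reachSet_subset_B I (hu.trans hj) hc, hbB, hE⟩)⟩

lemma lamRel_reach (I : PathInstance A) {u w : ℕ} (hu : 1 ≤ u) (huw : u < w)
    (hwl : w ≤ I.len) (hnb : ∀ i, u ≤ i → i + 1 ≤ w → ¬ BackwardAt I i) :
    {b ∈ I.B w | ∃ c ∈ reachSet I u, (c, b) ∈ lamRel I u w} = reachSet I w := by
  ext b
  constructor
  · rintro ⟨hbB, c, hc, _, _, hpath⟩
    exact noBackward_forward I hu hwl hnb hc hpath
  · intro hb
    exact ⟨reachSet_subset_B I (hu.trans huw.le) hb,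
      (reach_path I hu w huw.le le_rfl b hb).imp fun a ⟨ha, hpath⟩ =>
        ⟨ha, reachSet_subset_B I hu ha,
          reachSet_subset_B I (hu.trans huw.le) hb, hpath⟩⟩

lemma reachSet_lamInst (I : PathInstance A) (hlen : 1 ≤ I.len) :
    ∀ t, 1 ≤ t → t ≤ (lamInst I).len →
      reachSet (lamInst I) t = reachSet I (lamEnum I t) := by
  intro t ht
  induction t, ht using Nat.le_induction with
  | base =>
    intro _
    have hB : (lamInst I).B 1 = I.B 1 := by
      show I.B (lamEnum I 1) = I.B 1
      rw [lamEnum_one I hlen]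
    rw [lamEnum_one I hlen]
    show (lamInst I).B 1 = I.B 1
    exact hB
  | succ t ht ih =>
    intro htc
    have hcard : t + 1 ≤ (lamVars I).card := htc
    have ihe := ih (by omega)
    have hb_t := mem_lamVars_iff.mp (lamEnum_mem I ht (by omega))
    have hb_t1 := mem_lamVars_iff.mp (lamEnum_mem I (by omega) hcard)
    have hu1 : 1 ≤ lamEnum I t := hb_t.1.1
    have hlt : lamEnum I t < lamEnum I (t + 1) := lamEnum_lt I ht (Nat.lt_succ_self t) hcard
    rw [reachSet_succ (lamInst I) ht, ihe]
    by_cases hcase : lamEnum I (t + 1) = lamEnum I t + 1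
    · have hE : (lamInst I).E t = I.E (lamEnum I t) := by
        show (if lamEnum I (t + 1) = lamEnum I t + 1 then _ else _) = _
        rw [if_pos hcase]
      have hB : (lamInst I).B (t + 1) = I.B (lamEnum I (t + 1)) := rfl
      rw [hB, hE, hcase, reachSet_succ I hu1]
    · have hE : (lamInst I).E t = lamRel I (lamEnum I t) (lamEnum I (t + 1)) := by
        show (if lamEnum I (t + 1) = lamEnum I t + 1 then _ else _) = _
        rw [if_neg hcase]
      rw [show (lamInst I).B (t + 1) = I.B (lamEnum I (t + 1)) from rfl, hE]
      apply lamRel_reach I hu1 hlt hb_t1.1.2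
      intro i hi hi1 hback
      obtain ⟨hiU, hi1U⟩ := backward_mem_lamVars hback
      rcases eq_or_lt_of_le hi with h' | h'
      · exact lamEnum_between I ht hcard hi1U (by omega) (by omega)
      · exact lamEnum_between I ht hcard hiU h' (by omega)

end Aux

/-- `D_v = C_v`.
Let `I` be a path instance, and for each variable `v` of `I_λ` (here: position
`t` of the path instance `I_λ`, corresponding to the original variable
`lamEnum I t`), let `D_v ⊆ B_v` be the set of all values `s(v)` where `s`
ranges over solutions of `(I_λ)_{[1,v]}`. Then `D_v = C_v` for all `v ∈ U`.
In particular, `I_λ` is satisfiable iff `I` is satisfiable. -/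
theorem statement13 {A : Type} (I : PathInstance A) (hlen : 1 ≤ I.len) :
    (∀ t, 1 ≤ t → t ≤ (lamInst I).len →
      {a | ∃ s : ℕ → A, IsSolutionOn (lamInst I) 1 t s ∧ s t = a}
        = reachSet I (lamEnum I t)) ∧
    ((∃ s : ℕ → A, IsSolution (lamInst I) s) ↔ ∃ f : ℕ → A, IsSolution I f) := by
  have hc1 : 1 ≤ (lamVars I).card := Finset.card_pos.mpr ⟨1, one_mem_lamVars hlen⟩
  have hmain : ∀ t, 1 ≤ t → t ≤ (lamInst I).len →
      {a | ∃ s : ℕ → A, IsSolutionOn (lamInst I) 1 t s ∧ s t = a}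
        = reachSet I (lamEnum I t) := by
    intro t h1 h2
    rw [solSet_eq_reachSet (lamInst I) t h1, reachSet_lamInst I hlen t h1 h2]
  refine ⟨hmain, ?_⟩
  have hlenc : (lamInst I).len = (lamVars I).card := rfl
  have hDcard : {a | ∃ s : ℕ → A, IsSolutionOn (lamInst I) 1 (lamInst I).len s ∧
      s (lamInst I).len = a} = reachSet I I.len := by
    rw [hmain (lamInst I).len hc1 le_rfl]
    show reachSet I (lamEnum I (lamVars I).card) = _
    rw [lamEnum_card I hlen]
  have hDlen : {a | ∃ f : ℕ → A, IsSolutionOn I 1 I.len f ∧ f I.len = a}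
      = reachSet I I.len := solSet_eq_reachSet I I.len hlen
  constructor
  · rintro ⟨s, hs⟩
    have h1 : s (lamInst I).len ∈ reachSet I I.len := by
      rw [← hDcard]; exact ⟨s, hs, rfl⟩
    rw [← hDlen] at h1
    obtain ⟨f, hf, _⟩ := h1
    exact ⟨f, hf⟩
  · rintro ⟨f, hf⟩
    have h1 : f I.len ∈ reachSet I I.len := by
      rw [← hDlen]; exact ⟨f, hf, rfl⟩
    rw [← hDcard] at h1
    obtain ⟨s, hs, _⟩ := h1
    exact ⟨s, hs⟩

end CSPPaper
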